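/- arXiv:1305.1532 — 4 statements merged into one kernel-verified Lean document; each statement's English description precedes it below -/
import Mathlib

section
/- (Williamson normal form, uniqueness) If Σ is a 2n×2n real symmetric positive definite matrix and M₁, M₂ are symplectic matrices with M_i·Σ·M_iᵀ = diag(Λ_i,Λ_i), Λ_i = diag(ε^{(i)}_1,...,ε^{(i)}_n) positive diagonal, then the multisets {ε^{(1)}_1,...,ε^{(1)}_n} and {ε^{(2)}_1,...,ε^{(2)}_n} coincide. -/
open Matrix Polynomial

noncomputable section

/-- The 2×2 standard symplectic matrix. -/
def J2 : Matrix (Fin 2) (Fin 2) ℝ := !![0, 1; -1, 0]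

/-- The 2n×2n block-diagonal symplectic matrix `diag(J₂, ..., J₂)`. -/
def Jblock (n : ℕ) : Matrix (Fin (2 * n)) (Fin (2 * n)) ℝ :=
  fun i j =>
    if i.val / 2 = j.val / 2 then
      J2 ⟨i.val % 2, by omega⟩ ⟨j.val % 2, by omega⟩
    else 0

/-- The 2×2 block of a 2n×2n matrix at block position (m, k). -/
def blk {n : ℕ} (A : Matrix (Fin (2 * n)) (Fin (2 * n)) ℝ) (m k : Fin n) :
    Matrix (Fin 2) (Fin 2) ℝ :=
  fun i j =>
    A ⟨2 * m.val + i.val, by have := m.isLt; have := i.isLt; omega⟩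
      ⟨2 * k.val + j.val, by have := k.isLt; have := j.isLt; omega⟩

/-- `S` has eigenemittances `ε`: the spectrum of `S · J_{2n}` (over ℂ, with
multiplicity) is `±iε₁, ..., ±iε_n`. -/
def hasEigenemittances {n : ℕ} (S : Matrix (Fin (2 * n)) (Fin (2 * n)) ℝ)
    (ε : Fin n → ℝ) : Prop :=
  ((S * Jblock n).map (Complex.ofReal)).charpoly =
    ∏ m : Fin n, ((X - C (Complex.I * (ε m : ℂ))) * (X + C (Complex.I * (ε m : ℂ))))

/-- The standard 2n×2n symplectic form in the `(q₁,...,q_n,p₁,...,p_n)` ordering. -/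
def Jstd (n : ℕ) : Matrix (Fin n ⊕ Fin n) (Fin n ⊕ Fin n) ℝ :=
  Matrix.fromBlocks 0 1 (-1) 0

lemma perm_of_map_eq {n : ℕ} {f g : Fin n → ℝ}
    (h : Multiset.map f Finset.univ.val = Multiset.map g Finset.univ.val) :
    ∃ σ : Equiv.Perm (Fin n), ∀ m, f m = g (σ m) := by
  have hfg : (List.ofFn f).Perm (List.ofFn g) := by
    rw [← Multiset.coe_eq_coe, ← Fin.univ_val_map, ← Fin.univ_val_map]
    simpa [Multiset.map] using h
  have h1 : (List.ofFn (f ∘ Tuple.sort f)).Perm (List.ofFn (g ∘ Tuple.sort g)) :=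
    ((Tuple.sort f).ofFn_comp_perm f).trans
      (hfg.trans ((Tuple.sort g).ofFn_comp_perm g).symm)
  have h2 : f ∘ Tuple.sort f = g ∘ Tuple.sort g :=
    List.ofFn_injective (h1.eq_of_sortedLE
      (Tuple.monotone_sort f).sortedLE_ofFn (Tuple.monotone_sort g).sortedLE_ofFn)
  refine ⟨((Tuple.sort f).symm.trans (Tuple.sort g)), fun m => ?_⟩
  have := congrFun h2 ((Tuple.sort f).symm m)
  simpa using this

lemma JJ (n : ℕ) : Jstd n * Jstd n = -1 := by
  simp [Jstd, Matrix.fromBlocks_multiply, Matrix.fromBlocks_neg, ← Matrix.fromBlocks_one]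

lemma Jt (n : ℕ) : (Jstd n)ᵀ = -(Jstd n) := by
  simp [Jstd, Matrix.fromBlocks_transpose, Matrix.fromBlocks_neg]

lemma det_key {n : ℕ} (ε : Fin n → ℝ) (t : ℝ) (ht : t ≠ 0) :
    (t • (1 : Matrix (Fin n ⊕ Fin n) (Fin n ⊕ Fin n) ℝ) -
      Matrix.fromBlocks (Matrix.diagonal ε) 0 0 (Matrix.diagonal ε) * Jstd n).det
      = ∏ m : Fin n, (t ^ 2 + ε m ^ 2) := by
  have hDJ : Matrix.fromBlocks (Matrix.diagonal ε) 0 0 (Matrix.diagonal ε) * Jstd n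
      = Matrix.fromBlocks 0 (Matrix.diagonal ε) (-(Matrix.diagonal ε)) 0 := by
    rw [Jstd, Matrix.fromBlocks_multiply]
    congr 1 <;> simp
  have h1 : t • (1 : Matrix (Fin n ⊕ Fin n) (Fin n ⊕ Fin n) ℝ) -
      Matrix.fromBlocks 0 (Matrix.diagonal ε) (-(Matrix.diagonal ε)) 0 =
      Matrix.fromBlocks (t • 1) (-(Matrix.diagonal ε)) (Matrix.diagonal ε) (t • 1) := by
    rw [← Matrix.fromBlocks_one, Matrix.fromBlocks_smul, sub_eq_add_neg,
      Matrix.fromBlocks_neg, Matrix.fromBlocks_add]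
    congr 1 <;> simp
  letI : Invertible (t • (1 : Matrix (Fin n) (Fin n) ℝ)) :=
    ⟨t⁻¹ • 1, by simp [smul_smul, inv_mul_cancel₀ ht, mul_inv_cancel₀ ht],
      by simp [smul_smul, inv_mul_cancel₀ ht, mul_inv_cancel₀ ht]⟩
  rw [hDJ, h1, Matrix.det_fromBlocks₁₁]
  have hinv : (⅟ (t • (1 : Matrix (Fin n) (Fin n) ℝ))) = t⁻¹ • 1 := rfl
  rw [hinv]
  have h2 : (t • (1 : Matrix (Fin n) (Fin n) ℝ) -
      Matrix.diagonal ε * (t⁻¹ • 1) * -(Matrix.diagonal ε)) =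
      Matrix.diagonal (fun m => t + t⁻¹ * (ε m * ε m)) := by
    rw [Matrix.mul_smul, Matrix.mul_one, Matrix.smul_mul, Matrix.mul_neg, smul_neg,
      sub_neg_eq_add, Matrix.diagonal_mul_diagonal, Matrix.smul_one_eq_diagonal,
      ← Matrix.diagonal_smul, ← Matrix.diagonal_add]
    congr 1
  rw [h2, Matrix.det_diagonal, Matrix.det_smul, Matrix.det_one, mul_one]
  simp only [Fintype.card_fin, smul_eq_mul]
  have hpow : t ^ n = ∏ _m : Fin n, t := by simp
  rw [hpow, ← Finset.prod_mul_distrib]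
  refine Finset.prod_congr rfl fun m _ => ?_
  field_simp

lemma det_similar {n : ℕ} (S M D : Matrix (Fin n ⊕ Fin n) (Fin n ⊕ Fin n) ℝ)
    (hM : M * Jstd n * Mᵀ = Jstd n) (h : M * S * Mᵀ = D) (t : ℝ) :
    (t • 1 - S * Jstd n).det = (t • 1 - D * Jstd n).det := by
  have hMN : M * (Jstd n * Mᵀ * (-Jstd n)) = 1 := by
    rw [← Matrix.mul_assoc, ← Matrix.mul_assoc, hM, Matrix.mul_neg, JJ n]
    simp
  set N : Matrix (Fin n ⊕ Fin n) (Fin n ⊕ Fin n) ℝ := Jstd n * Mᵀ * (-Jstd n) with hN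
  have hNM : N * M = 1 := mul_eq_one_comm.mp hMN
  have hNt : Nᵀ = Jstd n * M * (-Jstd n) := by
    rw [hN, Matrix.transpose_mul, Matrix.transpose_mul, Matrix.transpose_neg,
      Matrix.transpose_transpose, Jt n]
    simp [Matrix.mul_assoc]
  have hNtJ : Nᵀ * Jstd n = Jstd n * M := by
    rw [hNt, Matrix.mul_assoc, Matrix.mul_assoc, Matrix.neg_mul, JJ n]
    simp
  have hS : S = N * D * Nᵀ := by
    have h2 := congrArg (fun A => N * A * Nᵀ) h
    rw [← h2, ← Matrix.mul_assoc, ← Matrix.mul_assoc, hNM, Matrix.one_mul,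
      Matrix.mul_assoc, ← Matrix.transpose_mul, hNM,
      Matrix.transpose_one, Matrix.mul_one]
  have key : t • 1 - S * Jstd n = N * (t • 1 - D * Jstd n) * M := by
    rw [Matrix.mul_sub, Matrix.sub_mul, Matrix.mul_smul, Matrix.mul_one,
      Matrix.smul_mul, hNM, hS, Matrix.mul_assoc (N * D), hNtJ,
      ← Matrix.mul_assoc, Matrix.mul_assoc N D]
  have hdet : N.det * M.det = 1 := by rw [← Matrix.det_mul, hNM, Matrix.det_one]
  rw [key, Matrix.det_mul, Matrix.det_mul]
  calc N.det * (t • 1 - D * Jstd n).det * M.det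
      = (t • 1 - D * Jstd n).det * (N.det * M.det) := by ring
    _ = (t • 1 - D * Jstd n).det := by rw [hdet, mul_one]

/-- Williamson normal form, uniqueness: the diagonal entries of the Williamson
normal form are unique up to reordering. -/
theorem stmt9 (n : ℕ) (S : Matrix (Fin n ⊕ Fin n) (Fin n ⊕ Fin n) ℝ) (hS : S.PosDef)
    (M₁ M₂ : Matrix (Fin n ⊕ Fin n) (Fin n ⊕ Fin n) ℝ) (ε₁ ε₂ : Fin n → ℝ)
    (hM₁ : M₁ * Jstd n * M₁ᵀ = Jstd n) (hM₂ : M₂ * Jstd n * M₂ᵀ = Jstd n)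
    (hε₁ : ∀ m, 0 < ε₁ m) (hε₂ : ∀ m, 0 < ε₂ m)
    (h₁ : M₁ * S * M₁ᵀ = Matrix.fromBlocks (Matrix.diagonal ε₁) 0 0 (Matrix.diagonal ε₁))
    (h₂ : M₂ * S * M₂ᵀ = Matrix.fromBlocks (Matrix.diagonal ε₂) 0 0 (Matrix.diagonal ε₂)) :
    ∃ σ : Equiv.Perm (Fin n), ∀ m, ε₁ m = ε₂ (σ m) := by
  have hdet : ∀ t : ℝ, t ≠ 0 →
      (∏ m : Fin n, (t ^ 2 + ε₁ m ^ 2)) = ∏ m : Fin n, (t ^ 2 + ε₂ m ^ 2) := by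
    intro t ht
    rw [← det_key ε₁ t ht, ← det_key ε₂ t ht, ← det_similar S M₁ _ hM₁ h₁ t,
      ← det_similar S M₂ _ hM₂ h₂ t]
  have hP : (∏ m : Fin n, (X - C (-(ε₁ m ^ 2)))) = ∏ m : Fin n, (X - C (-(ε₂ m ^ 2))) := by
    rw [← sub_eq_zero]
    apply Polynomial.eq_zero_of_infinite_isRoot
    apply Set.infinite_of_injective_forall_mem
      (f := fun k : ℕ => (((k : ℝ) + 1) ^ 2 : ℝ))
    · have : StrictMono (fun k : ℕ => (((k : ℝ) + 1) ^ 2 : ℝ)) := by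
        intro a b hab
        have h : (a : ℝ) < b := Nat.cast_lt.mpr hab
        have ha : (0:ℝ) ≤ a := Nat.cast_nonneg a
        show ((a : ℝ) + 1) ^ 2 < ((b : ℝ) + 1) ^ 2
        nlinarith
      exact this.injective
    · intro k
      have hk : ((k : ℝ) + 1) ≠ 0 := by positivity
      have hd := hdet ((k : ℝ) + 1) hk
      simp only [Set.mem_setOf_eq, Polynomial.IsRoot, Polynomial.eval_sub,
        Polynomial.eval_prod, Polynomial.eval_X, Polynomial.eval_C, sub_neg_eq_add,
        sub_eq_zero]
      exact hd
  have hr : Multiset.map (fun m => -(ε₁ m ^ 2)) Finset.univ.val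
      = Multiset.map (fun m => -(ε₂ m ^ 2)) Finset.univ.val := by
    have e1 : ∀ ε : Fin n → ℝ, (∏ m : Fin n, (X - C (-(ε m ^ 2)))).roots
        = Multiset.map (fun m => -(ε m ^ 2)) Finset.univ.val := by
      intro ε
      have hmm : (Multiset.map (fun m => -(ε m ^ 2)) Finset.univ.val).map
          (fun a : ℝ => X - C a) = Multiset.map (fun m => X - C (-(ε m ^ 2)))
          Finset.univ.val := Multiset.map_map _ _ _
      rw [Finset.prod_eq_multiset_prod, ← hmm, Polynomial.roots_multiset_prod_X_sub_C]
    rw [← e1 ε₁, ← e1 ε₂, hP]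
  have hmap : Multiset.map ε₁ Finset.univ.val = Multiset.map ε₂ Finset.univ.val := by
    have h2 := congrArg (Multiset.map (fun x : ℝ => Real.sqrt (-x))) hr
    rw [Multiset.map_map, Multiset.map_map] at h2
    have e2 : ∀ (ε : Fin n → ℝ), (∀ m, 0 < ε m) →
        Multiset.map ((fun x : ℝ => Real.sqrt (-x)) ∘ fun m => -(ε m ^ 2)) Finset.univ.val
          = Multiset.map ε Finset.univ.val := by
      intro ε hε
      refine Multiset.map_congr rfl fun m _ => ?_
      simp [Real.sqrt_sq (hε m).le]
    rw [e2 ε₁ hε₁, e2 ε₂ hε₂] at h2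
    exact h2
  exact perm_of_map_eq hmap
end
end

section
/- (Classical uncertainty principle) Let Σ be a 2n×2n real symmetric positive definite matrix with eigenemittances ε₁,...,ε_n and projected emittances ε̃₁,...,ε̃_n. Then every projected emittance is at least the minimal eigenemittance: ε̃_m ≥ min_k ε_k for all m. -/
open Matrix Polynomial
open scoped ComplexOrder

noncomputable section

/- ## Auxiliary lemmas -/

lemma aux_charpoly_eval {R : Type*} [CommRing R] {k : Type*} [DecidableEq k] [Fintype k]
    (M : Matrix k k R) (t : R) : M.charpoly.eval t = (t • (1 : Matrix k k R) - M).det := by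
  rw [Matrix.charpoly, ← Polynomial.coe_evalRingHom, RingHom.map_det]
  congr 1
  ext i j
  by_cases h : i = j
  · subst h
    simp [charmatrix_apply_eq, Matrix.one_apply_eq]
  · simp [charmatrix_apply_ne _ _ _ h, Matrix.one_apply_ne h]

lemma aux_charpoly_conj {R : Type*} [CommRing R] {k : Type*} [DecidableEq k] [Fintype k]
    (P Q M : Matrix k k R) (h1 : P * Q = 1) (h2 : Q * P = 1) :
    (P * M * Q).charpoly = M.charpoly := by
  have hmapone : (1 : Matrix k k R).map (C : R →+* R[X]) = 1 := by
    ext i j; by_cases h : i = j <;>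
      simp [Matrix.map_apply, Matrix.one_apply, h]
  have hc : charmatrix (P * M * Q)
      = (P.map (C : R →+* R[X])) * charmatrix M * (Q.map (C : R →+* R[X])) := by
    unfold charmatrix
    rw [Matrix.mul_sub, Matrix.sub_mul]
    congr 1
    · rw [scalar_apply, ← Matrix.smul_one_eq_diagonal, Matrix.mul_smul, Matrix.smul_mul,
        Matrix.mul_one, ← Matrix.map_mul, h1, hmapone]
    · simp only [RingHom.mapMatrix_apply, Matrix.map_mul]
  rw [Matrix.charpoly, Matrix.charpoly, hc, Matrix.det_mul, Matrix.det_mul, mul_comm,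
    ← mul_assoc, ← Matrix.det_mul, ← Matrix.map_mul, h2, hmapone, Matrix.det_one, one_mul]

lemma Jblock_apply {n : ℕ} (i j : Fin (2 * n)) :
    Jblock n i j =
      if i.val / 2 = j.val / 2 then
        (if i.val % 2 = 0 ∧ j.val % 2 = 1 then 1
          else if i.val % 2 = 1 ∧ j.val % 2 = 0 then -1 else 0)
      else 0 := by
  unfold Jblock
  by_cases h : i.val / 2 = j.val / 2
  · rw [if_pos h, if_pos h]
    rcases Nat.mod_two_eq_zero_or_one i.val with h1 | h1 <;>
      rcases Nat.mod_two_eq_zero_or_one j.val with h2 | h2 <;>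
        simp [h1, h2, J2]
  · rw [if_neg h, if_neg h]

lemma Jblock_mul_self (n : ℕ) : Jblock n * Jblock n = -1 := by
  ext i j
  rw [Matrix.mul_apply]
  have hi := i.isLt
  have hj := j.isLt
  have hneg : ∀ (x y : Fin (2 * n)), (-1 : Matrix (Fin (2*n)) (Fin (2*n)) ℝ) x y
      = if x.val = y.val then -1 else 0 := by
    intro x y
    rw [Matrix.neg_apply]
    by_cases h : x = y
    · rw [if_pos (congrArg Fin.val h), h, Matrix.one_apply_eq]
    · rw [if_neg (fun hv => h (Fin.ext hv)), Matrix.one_apply_ne h, neg_zero]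
  have hk0lt : 2 * (i.val / 2) + (1 - i.val % 2) < 2 * n := by omega
  rw [Finset.sum_eq_single (⟨2 * (i.val / 2) + (1 - i.val % 2), hk0lt⟩ : Fin (2 * n))]
  · simp only [Jblock_apply, Fin.val_mk, hneg]
    split_ifs <;> first | ring1 | (exfalso; omega)
  · intro b _ hb
    have hbv : b.val ≠ 2 * (i.val / 2) + (1 - i.val % 2) := fun h => hb (Fin.ext h)
    have hblt := b.isLt
    simp only [Jblock_apply, Fin.val_mk]
    split_ifs <;> first | ring1 | (exfalso; omega)
  · exact fun h => absurd (Finset.mem_univ _) h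

lemma Jblock_transpose (n : ℕ) : (Jblock n)ᵀ = -Jblock n := by
  ext i j
  rw [Matrix.transpose_apply, Matrix.neg_apply, Jblock_apply, Jblock_apply]
  split_ifs <;> first | ring1 | (exfalso; omega)

lemma aux_map_mul {k : ℕ} (P Q : Matrix (Fin k) (Fin k) ℝ) :
    (P * Q).map Complex.ofReal = P.map Complex.ofReal * Q.map Complex.ofReal := by
  ext i j
  simp only [Matrix.map_apply, Matrix.mul_apply]
  push_cast
  rfl

lemma aux_single_quad {k : ℕ} (M : Matrix (Fin k) (Fin k) ℂ) (i j : Fin k) :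
    Pi.single i (1:ℂ) ⬝ᵥ (M *ᵥ Pi.single j 1) = M i j := by
  rw [Matrix.mulVec_single, single_dotProduct]
  simp

lemma aux_single_quad_real {k : ℕ} (M : Matrix (Fin k) (Fin k) ℝ) (i j : Fin k) :
    Pi.single i (1:ℝ) ⬝ᵥ (M *ᵥ Pi.single j 1) = M i j := by
  rw [Matrix.mulVec_single, single_dotProduct]
  simp

lemma aux_star_single {k : ℕ} (i : Fin k) :
    star (Pi.single i (1:ℂ)) = (Pi.single i 1 : Fin k → ℂ) := by
  ext t
  by_cases h : t = i <;> simp [Pi.single_apply, h]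

lemma aux_quad_expand {k : ℕ} (M : Matrix (Fin k) (Fin k) ℂ) (i j : Fin k) (p q : ℂ) :
    star (p • (Pi.single i 1 : Fin k → ℂ) + q • (Pi.single j 1 : Fin k → ℂ)) ⬝ᵥ
      (M *ᵥ (p • (Pi.single i 1 : Fin k → ℂ) + q • (Pi.single j 1 : Fin k → ℂ))) =
    star p * p * M i i + star p * q * M i j + star q * p * M j i + star q * q * M j j := by
  simp only [star_add, star_smul, aux_star_single, Matrix.mulVec_add, Matrix.mulVec_smul,
    dotProduct_add, add_dotProduct, dotProduct_smul, smul_dotProduct,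
    aux_single_quad, smul_eq_mul]
  ring

lemma aux_posdef_map {k : ℕ} (S : Matrix (Fin k) (Fin k) ℝ) (hS : S.PosDef) :
    (S.map Complex.ofReal).PosDef := by
  have hherm : (S.map Complex.ofReal).IsHermitian := by
    ext i j
    have hsymm : S j i = S i j := by
      have := congrFun (congrFun hS.1 i) j
      simpa [Matrix.conjTranspose_apply] using this
    simp [Matrix.conjTranspose_apply, Matrix.map_apply, Complex.conj_ofReal, hsymm]
  open scoped MatrixOrder in
  obtain ⟨B, hB⟩ := CStarAlgebra.nonneg_iff_eq_star_mul_self.mp hS.posSemidef.nonneg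
  have hpsd : (S.map Complex.ofReal).PosSemidef := by
    have : S.map Complex.ofReal = (B.map Complex.ofReal)ᴴ * B.map Complex.ofReal := by
      rw [hB, aux_map_mul]
      congr 1
      ext i j
      simp [Matrix.conjTranspose_apply, Matrix.star_apply, Matrix.map_apply, Complex.conj_ofReal]
    rw [this]
    exact Matrix.posSemidef_conjTranspose_mul_self _
  have hdet : (S.map Complex.ofReal).det ≠ 0 := by
    have : (S.map Complex.ofReal).det = (S.det : ℂ) := by
      rw [show S.map Complex.ofReal = Complex.ofRealHom.mapMatrix S from rfl,
        ← RingHom.map_det]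
      rfl
    rw [this]
    exact_mod_cast hS.det_pos.ne'
  refine Matrix.PosDef.of_dotProduct_mulVec_pos hherm fun x hx => ?_
  refine lt_of_le_of_ne (hpsd.dotProduct_mulVec_nonneg x) fun h0 => hx ?_
  have hAx : S.map Complex.ofReal *ᵥ x = 0 := (hpsd.dotProduct_mulVec_zero_iff x).mp h0.symm
  have hinj := Matrix.mulVec_injective_iff_isUnit.mpr
    ((Matrix.isUnit_iff_isUnit_det _).mpr hdet.isUnit)
  exact hinj (by simpa using hAx)

set_option maxHeartbeats 1000000 in
/-- Classical uncertainty principle: every projected emittance is at least the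
minimal eigenemittance. -/
theorem stmt13 (n : ℕ) (hn : 0 < n) (S : Matrix (Fin (2 * n)) (Fin (2 * n)) ℝ)
    (ε : Fin n → ℝ) (hS : S.PosDef) (hpos : ∀ m, 0 < ε m)
    (hε : hasEigenemittances S ε) (m : Fin n) :
    Finset.univ.inf' ⟨⟨0, hn⟩, Finset.mem_univ _⟩ ε ≤ Real.sqrt (blk S m m).det := by
  classical
  set e0 : ℝ := Finset.univ.inf' ⟨⟨0, hn⟩, Finset.mem_univ _⟩ ε with he0def
  have he0pos : 0 < e0 := (Finset.lt_inf'_iff _).mpr fun i _ => hpos i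
  have he0le : ∀ k, e0 ≤ ε k := fun k => Finset.inf'_le _ (Finset.mem_univ k)
  set A : Matrix (Fin (2*n)) (Fin (2*n)) ℂ := S.map Complex.ofReal with hAdef
  set 𝕁 : Matrix (Fin (2*n)) (Fin (2*n)) ℂ := (Jblock n).map Complex.ofReal with hJdef
  have hA : A.PosDef := aux_posdef_map S hS
  have hmapneg : ((-1 : Matrix (Fin (2*n)) (Fin (2*n)) ℝ)).map Complex.ofReal = -1 := by
    ext i j
    by_cases h : i = j <;>
      simp [Matrix.map_apply, Matrix.neg_apply, Matrix.one_apply, h]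
  have hJJ : 𝕁 * 𝕁 = -1 := by
    rw [hJdef, ← aux_map_mul, Jblock_mul_self, hmapneg]
  have hJH : 𝕁ᴴ = -𝕁 := by
    ext i j
    have := congrFun (congrFun (Jblock_transpose n) i) j
    rw [Matrix.transpose_apply, Matrix.neg_apply] at this
    simp [hJdef, Matrix.conjTranspose_apply, Matrix.map_apply, Matrix.neg_apply,
      Complex.conj_ofReal, this]
  have hApsd : A.PosSemidef := hA.posSemidef
  open scoped MatrixOrder in
  obtain ⟨R, hRpsd, hRA⟩ : ∃ R : Matrix (Fin (2*n)) (Fin (2*n)) ℂ, R.PosSemidef ∧ R * R = A :=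
    ⟨CFC.sqrt A, (CFC.sqrt_nonneg A).posSemidef, CFC.sqrt_mul_sqrt_self A hApsd.nonneg⟩
  have hRH : Rᴴ = R := hRpsd.1
  have hdetA : A.det ≠ 0 := hA.det_pos.ne'
  have hdetR : R.det ≠ 0 := by
    intro h
    exact hdetA (by rw [← hRA, Matrix.det_mul, h, zero_mul])
  set Ri : Matrix (Fin (2*n)) (Fin (2*n)) ℂ := R⁻¹ with hRidef
  have hRRi : R * Ri = 1 := Matrix.mul_nonsing_inv _ hdetR.isUnit
  have hRiR : Ri * R = 1 := Matrix.nonsing_inv_mul _ hdetR.isUnit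
  have hRiH : Riᴴ = Ri := hRpsd.1.inv
  have hAAi : A * A⁻¹ = 1 := Matrix.mul_nonsing_inv _ hdetA.isUnit
  have hAiA : A⁻¹ * A = 1 := Matrix.nonsing_inv_mul _ hdetA.isUnit
  have hRRi' : ∀ X, R * (Ri * X) = X := fun X => by
    rw [← Matrix.mul_assoc, hRRi, Matrix.one_mul]
  have hRiR' : ∀ X, Ri * (R * X) = X := fun X => by
    rw [← Matrix.mul_assoc, hRiR, Matrix.one_mul]
  have hJJ' : ∀ X, 𝕁 * (𝕁 * X) = -X := fun X => by
    rw [← Matrix.mul_assoc, hJJ, Matrix.neg_mul, Matrix.one_mul]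
  set H : Matrix (Fin (2*n)) (Fin (2*n)) ℂ := Complex.I • (R * (𝕁 * R)) with hHdef
  set K : Matrix (Fin (2*n)) (Fin (2*n)) ℂ := Complex.I • (Ri * (𝕁 * Ri)) with hKdef
  have hHK : H * K = 1 := by
    rw [hHdef, hKdef, smul_mul_smul_comm, Complex.I_mul_I]
    have : (R * (𝕁 * R)) * (Ri * (𝕁 * Ri)) = -1 := by
      simp only [Matrix.mul_assoc]
      rw [hRRi', hJJ', Matrix.mul_neg, hRRi]
    rw [this]
    simp
  have hKherm : K.IsHermitian := by
    show Kᴴ = K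
    rw [hKdef]
    simp only [Matrix.conjTranspose_smul, Matrix.conjTranspose_mul, hRiH, hJH,
      Complex.star_def, Complex.conj_I, Matrix.mul_neg, Matrix.neg_mul, neg_smul, smul_neg,
      neg_neg, Matrix.mul_assoc]
  -- every eigenvalue μ of K satisfies 0 ≤ 1 + e0 * μ
  have hbound : ∀ i, 0 ≤ 1 + e0 * hKherm.eigenvalues i := by
    intro i
    set μ : ℝ := hKherm.eigenvalues i with hμdef
    have hv := hKherm.mulVec_eigenvectorBasis i
    set v : Fin (2*n) → ℂ := ⇑(hKherm.eigenvectorBasis i) with hvdef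
    have hvne : v ≠ 0 := by
      rw [hvdef]
      simpa using hKherm.eigenvectorBasis.orthonormal.ne_zero i
    have hKv : K *ᵥ v = (μ:ℂ) • v := by
      rw [hv]
      ext t
      simp [Complex.real_smul, hμdef]
    have hμ0 : μ ≠ 0 := by
      intro h
      apply hvne
      have h1 : H *ᵥ (K *ᵥ v) = v := by rw [Matrix.mulVec_mulVec, hHK, Matrix.one_mulVec]
      rw [hKv, h] at h1
      simpa using h1.symm
    have hHv : H *ᵥ v = ((μ⁻¹ : ℝ) : ℂ) • v := by
      have h1 : H *ᵥ (K *ᵥ v) = v := by rw [Matrix.mulVec_mulVec, hHK, Matrix.one_mulVec]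
      rw [hKv, Matrix.mulVec_smul] at h1
      have hμc : ((μ:ℝ):ℂ) ≠ 0 := by exact_mod_cast hμ0
      calc H *ᵥ v = ((μ:ℂ)⁻¹ * (μ:ℂ)) • (H *ᵥ v) := by
            rw [inv_mul_cancel₀ hμc, one_smul]
        _ = (μ:ℂ)⁻¹ • v := by rw [mul_smul, h1]
        _ = ((μ⁻¹ : ℝ) : ℂ) • v := by norm_cast
    have hdet0 : ((((μ⁻¹:ℝ)):ℂ) • (1 : Matrix (Fin (2*n)) (Fin (2*n)) ℂ) - H).det = 0 := by
      rw [← Matrix.exists_mulVec_eq_zero_iff]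
      refine ⟨v, hvne, ?_⟩
      rw [Matrix.sub_mulVec, Matrix.smul_mulVec, Matrix.one_mulVec, hHv, sub_self]
    have hch : (R * (𝕁 * R)).charpoly = ((S * Jblock n).map Complex.ofReal).charpoly := by
      have h1 : R * (𝕁 * A) * Ri = R * (𝕁 * R) := by
        rw [← hRA]
        simp only [Matrix.mul_assoc]
        rw [hRRi, Matrix.mul_one]
      have h2 : A * (𝕁 * A) * A⁻¹ = A * 𝕁 := by
        simp only [Matrix.mul_assoc]
        rw [hAAi, Matrix.mul_one]
      have e1 := aux_charpoly_conj R Ri (𝕁 * A) hRRi hRiR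
      have e2 := aux_charpoly_conj A A⁻¹ (𝕁 * A) hAAi hAiA
      rw [h1] at e1
      rw [h2] at e2
      calc (R * (𝕁 * R)).charpoly = (𝕁 * A).charpoly := e1
        _ = (A * 𝕁).charpoly := e2.symm
        _ = ((S * Jblock n).map Complex.ofReal).charpoly := by
            rw [aux_map_mul, ← hAdef, ← hJdef]
    have heval : Polynomial.eval (((μ⁻¹:ℝ):ℂ)) H.charpoly = 0 := by
      rw [aux_charpoly_eval]
      exact hdet0
    have hHch : H.charpoly.eval (((μ⁻¹:ℝ):ℂ))
        = Complex.I ^ (2*n) *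
          ((R * (𝕁 * R)).charpoly.eval (-Complex.I * ((μ⁻¹:ℝ):ℂ))) := by
      rw [aux_charpoly_eval, aux_charpoly_eval]
      have hmm : (((μ⁻¹:ℝ):ℂ)) • (1 : Matrix (Fin (2*n)) (Fin (2*n)) ℂ) - H
          = Complex.I • ((-Complex.I * ((μ⁻¹:ℝ):ℂ)) • (1 : Matrix (Fin (2*n)) (Fin (2*n)) ℂ)
              - (R * (𝕁 * R))) := by
        rw [smul_sub, smul_smul]
        rw [show Complex.I * (-Complex.I * ((μ⁻¹:ℝ):ℂ))
            = -(Complex.I * Complex.I) * ((μ⁻¹:ℝ):ℂ) from by ring, Complex.I_mul_I]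
        rw [hHdef]
        ring_nf
      rw [hmm, Matrix.det_smul, Fintype.card_fin]
    rw [hHch, hch, hε] at heval
    have hIne : (Complex.I)^(2*n) ≠ 0 := pow_ne_zero _ Complex.I_ne_zero
    have hprod := (mul_eq_zero.mp heval).resolve_left hIne
    rw [Polynomial.eval_prod] at hprod
    obtain ⟨k, _, hk⟩ := Finset.prod_eq_zero_iff.mp hprod
    simp only [Polynomial.eval_mul, Polynomial.eval_sub, Polynomial.eval_add,
      Polynomial.eval_X, Polynomial.eval_C] at hk
    rcases mul_eq_zero.mp hk with h | h
    · -- -I * x - I ε k = 0 → μ⁻¹ = -ε k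
      have h' : (-Complex.I) * (((μ⁻¹:ℝ):ℂ) + (ε k:ℂ)) = 0 := by linear_combination h
      have hxc := (mul_eq_zero.mp h').resolve_left (neg_ne_zero.mpr Complex.I_ne_zero)
      have hxr : μ⁻¹ = -ε k := by
        have : ((μ⁻¹:ℝ):ℂ) = ((-ε k:ℝ):ℂ) := by
          rw [add_eq_zero_iff_eq_neg] at hxc
          rw [hxc]
          push_cast
          ring
        exact_mod_cast this
      have hμval : μ = -(ε k)⁻¹ := by
        rw [← inv_inv μ, hxr]
        rw [inv_neg]
      have hinv : 0 < (ε k)⁻¹ := inv_pos.mpr (hpos k)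
      have hle : e0 * (ε k)⁻¹ ≤ ε k * (ε k)⁻¹ :=
        mul_le_mul_of_nonneg_right (he0le k) hinv.le
      rw [mul_inv_cancel₀ (hpos k).ne'] at hle
      rw [hμval]
      linarith
    · -- -I * x + I ε k = 0 → μ⁻¹ = ε k > 0
      have h' : (-Complex.I) * (((μ⁻¹:ℝ):ℂ) - (ε k:ℂ)) = 0 := by linear_combination h
      have hxc := (mul_eq_zero.mp h').resolve_left (neg_ne_zero.mpr Complex.I_ne_zero)
      have hxr : μ⁻¹ = ε k := by
        have : ((μ⁻¹:ℝ):ℂ) = ((ε k:ℝ):ℂ) := by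
          rw [sub_eq_zero] at hxc
          exact hxc
        exact_mod_cast this
      have hμpos : 0 < μ := by
        have : 0 < μ⁻¹ := hxr ▸ hpos k
        exact inv_pos.mp this
      nlinarith [mul_pos he0pos hμpos]
  -- 1 + e0 • K is PSD
  have hU : (hKherm.eigenvectorUnitary : Matrix (Fin (2*n)) (Fin (2*n)) ℂ)
      * star (hKherm.eigenvectorUnitary : Matrix (Fin (2*n)) (Fin (2*n)) ℂ) = 1 :=
    Matrix.mem_unitaryGroup_iff.mp hKherm.eigenvectorUnitary.2
  have hLdecomp : (1 : Matrix (Fin (2*n)) (Fin (2*n)) ℂ) + (e0:ℂ) • K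
      = (hKherm.eigenvectorUnitary : Matrix (Fin (2*n)) (Fin (2*n)) ℂ)
        * Matrix.diagonal (fun i => ((1 + e0 * hKherm.eigenvalues i : ℝ) : ℂ))
        * star (hKherm.eigenvectorUnitary : Matrix (Fin (2*n)) (Fin (2*n)) ℂ) := by
    have hdiag : Matrix.diagonal (fun i : Fin (2*n) => ((1 + e0 * hKherm.eigenvalues i : ℝ):ℂ))
        = 1 + (e0:ℂ) • Matrix.diagonal ((RCLike.ofReal ∘ hKherm.eigenvalues : Fin (2*n) → ℂ)) := by
      ext i j
      rcases eq_or_ne i j with h | h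
      · subst h
        simp only [Matrix.diagonal_apply_eq, Matrix.add_apply, Matrix.one_apply_eq,
          Matrix.smul_apply, Function.comp_apply, smul_eq_mul]
        rw [show (RCLike.ofReal : ℝ → ℂ) = Complex.ofReal from rfl]
        push_cast
        ring
      · simp [Matrix.diagonal_apply_ne _ h, Matrix.one_apply_ne h]
    rw [hdiag, Matrix.mul_add, Matrix.add_mul, Matrix.mul_one, hU, mul_smul_comm,
      smul_mul_assoc, ← Unitary.conjStarAlgAut_apply (S := ℂ), ← hKherm.spectral_theorem]
  have hLpsd : ((1 : Matrix (Fin (2*n)) (Fin (2*n)) ℂ) + (e0:ℂ) • K).PosSemidef := by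
    rw [hLdecomp, Matrix.star_eq_conjTranspose]
    exact (Matrix.posSemidef_diagonal_iff.mpr fun i =>
      Complex.zero_le_real.mpr (hbound i)).mul_mul_conjTranspose_same _
  have hQpsd : (R * ((1 : Matrix (Fin (2*n)) (Fin (2*n)) ℂ) + (e0:ℂ) • K) * R).PosSemidef := by
    have := hLpsd.mul_mul_conjTranspose_same R
    rwa [hRH] at this
  have hKRR : R * ((e0:ℂ) • K) * R = ((e0:ℂ) * Complex.I) • 𝕁 := by
    rw [hKdef, mul_smul_comm, smul_mul_assoc, mul_smul_comm, smul_mul_assoc, smul_smul]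
    have hin : R * (Ri * (𝕁 * Ri)) * R = 𝕁 := by
      simp only [Matrix.mul_assoc]
      rw [hRiR, Matrix.mul_one, hRRi']
    rw [hin]
  have hQeq : R * ((1 : Matrix (Fin (2*n)) (Fin (2*n)) ℂ) + (e0:ℂ) • K) * R
      = A + ((e0:ℂ) * Complex.I) • 𝕁 := by
    rw [Matrix.mul_add, Matrix.add_mul, Matrix.mul_one, hRA, hKRR]
  have hP : (A + ((e0:ℂ) * Complex.I) • 𝕁).PosSemidef := by
    rw [hQeq] at hQpsd
    exact hQpsd
  -- final 2×2 computation
  have hm2 : 2 * m.val + 1 < 2 * n := by have := m.isLt; omega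
  set i0 : Fin (2*n) := ⟨2 * m.val, by omega⟩ with hi0def
  set i1 : Fin (2*n) := ⟨2 * m.val + 1, hm2⟩ with hi1def
  set a : ℝ := S i0 i0 with hadef
  set c : ℝ := S i1 i1 with hcdef
  set s : ℝ := S i0 i1 with hsdef
  have hs' : S i1 i0 = s := by
    have := congrFun (congrFun hS.1 i0) i1
    simpa [Matrix.conjTranspose_apply] using this
  have ha : 0 < a := by
    have h1 := hS.dotProduct_mulVec_pos (x := Pi.single i0 1)
      (fun hz => one_ne_zero (α := ℝ) (by simpa using congrFun hz i0))
    rwa [star_trivial, aux_single_quad_real] at h1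
  -- Jblock entries
  have hi0v : i0.val = 2 * m.val := rfl
  have hi1v : i1.val = 2 * m.val + 1 := rfl
  have hJ00 : Jblock n i0 i0 = 0 := by
    rw [Jblock_apply, hi0v]
    split_ifs <;> first | ring1 | (exfalso; omega)
  have hJ01 : Jblock n i0 i1 = 1 := by
    rw [Jblock_apply, hi0v, hi1v]
    split_ifs <;> first | ring1 | (exfalso; omega)
  have hJ10 : Jblock n i1 i0 = -1 := by
    rw [Jblock_apply, hi0v, hi1v]
    split_ifs <;> first | ring1 | (exfalso; omega)
  have hJ11 : Jblock n i1 i1 = 0 := by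
    rw [Jblock_apply, hi1v]
    split_ifs <;> first | ring1 | (exfalso; omega)
  have hPentry : ∀ u w : Fin (2*n), (A + ((e0:ℂ) * Complex.I) • 𝕁) u w
      = (S u w : ℂ) + (e0:ℂ) * Complex.I * (Jblock n u w : ℂ) := by
    intro u w
    simp [hAdef, hJdef, Matrix.add_apply, Matrix.smul_apply, Matrix.map_apply, smul_eq_mul]
  have hquad := hP.dotProduct_mulVec_nonneg (((s:ℂ) + (e0:ℂ) * Complex.I) • (Pi.single i0 1 : Fin (2*n) → ℂ)
      + (-(a:ℂ)) • (Pi.single i1 1 : Fin (2*n) → ℂ))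
  rw [aux_quad_expand] at hquad
  rw [hPentry i0 i0, hPentry i0 i1, hPentry i1 i0, hPentry i1 i1, hJ00, hJ01, hJ10, hJ11,
    hs'] at hquad
  have hTeq : star ((s:ℂ) + (e0:ℂ) * Complex.I) * ((s:ℂ) + (e0:ℂ) * Complex.I)
        * ((a:ℂ) + (e0:ℂ) * Complex.I * ((0:ℝ):ℂ))
      + star ((s:ℂ) + (e0:ℂ) * Complex.I) * (-(a:ℂ))
        * ((s:ℂ) + (e0:ℂ) * Complex.I * ((1:ℝ):ℂ))
      + star (-(a:ℂ)) * ((s:ℂ) + (e0:ℂ) * Complex.I)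
        * ((s:ℂ) + (e0:ℂ) * Complex.I * ((-1:ℝ):ℂ))
      + star (-(a:ℂ)) * (-(a:ℂ)) * ((c:ℂ) + (e0:ℂ) * Complex.I * ((0:ℝ):ℂ))
      = ((a * (a * c - s^2 - e0^2) : ℝ) : ℂ) := by
    have hstar1 : star ((s:ℂ) + (e0:ℂ) * Complex.I) = (s:ℂ) - (e0:ℂ) * Complex.I := by
      simp [Complex.ext_iff]
    have hstar2 : star (-(a:ℂ)) = -(a:ℂ) := by
      simp [Complex.ext_iff]
    rw [hstar1, hstar2]
    push_cast
    linear_combination ((a:ℂ) * (e0:ℂ)^2) * Complex.I_sq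
  rw [hTeq] at hquad
  have hreal : 0 ≤ a * (a * c - s^2 - e0^2) := Complex.zero_le_real.mp hquad
  have hd : e0^2 ≤ a * c - s^2 := by nlinarith
  have hdet : (blk S m m).det = a * c - s * s := by
    rw [Matrix.det_fin_two]
    have e00 : blk S m m 0 0 = a := by
      rw [hadef]
      show S _ _ = S i0 i0
      congr 1 <;> exact Fin.ext (by simp [hi0v])
    have e01 : blk S m m 0 1 = s := by
      rw [hsdef]
      show S _ _ = S i0 i1
      congr 1 <;> exact Fin.ext (by simp [hi0v, hi1v])
    have e10 : blk S m m 1 0 = s := by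
      rw [← hs']
      show S _ _ = S i1 i0
      congr 1 <;> exact Fin.ext (by simp [hi0v, hi1v])
    have e11 : blk S m m 1 1 = c := by
      rw [hcdef]
      show S _ _ = S i1 i1
      congr 1 <;> exact Fin.ext (by simp [hi1v])
    rw [e00, e01, e10, e11]
  rw [hdet]
  have hynn : 0 ≤ a * c - s * s := by nlinarith
  rw [Real.le_sqrt he0pos.le hynn]
  nlinarith
end
end

section
/- Let Σ be a 2n×2n real symmetric positive definite matrix with eigenemittances ε₁,...,ε_n and projected emittances ε̃₁,...,ε̃_n. Then Σ is block-diagonal (all off-diagonal 2×2 blocks vanish) if and only if ε̃₁·...·ε̃_n = ε₁·...·ε_n. -/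
open Matrix Polynomial

noncomputable section

/-- PosDef is closed under submatrix by an injective map. -/
lemma posDef_submatrix_inj {l m : Type*} [Fintype l] [Fintype m] [DecidableEq l] [DecidableEq m]
    {A : Matrix m m ℝ} (hA : A.PosDef) (f : l → m) (hf : Function.Injective f) :
    (A.submatrix f f).PosDef := by
  refine posDef_iff_dotProduct_mulVec.mpr ⟨?_, ?_⟩
  · have h := hA.1
    ext i j
    simpa [Matrix.conjTranspose_apply] using congrFun (congrFun h (f i)) (f j)
  · intro x hx
    set y : m → ℝ := fun j => ∑ i, if f i = j then x i else 0 with hy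
    have key : ∀ v : m → ℝ, y ⬝ᵥ v = ∑ i, x i * v (f i) := by
      intro v
      simp only [dotProduct, hy, Finset.sum_mul, ite_mul, zero_mul]
      rw [Finset.sum_comm]
      simp
    have hmv : ∀ j', (A *ᵥ y) j' = ∑ i, A j' (f i) * x i := by
      intro j'
      simp only [mulVec, dotProduct, hy, Finset.mul_sum, mul_ite, mul_zero]
      rw [Finset.sum_comm]
      simp
    have hform : y ⬝ᵥ A *ᵥ y = x ⬝ᵥ (A.submatrix f f) *ᵥ x := by
      rw [key]
      simp only [hmv]
      simp [dotProduct, mulVec, submatrix_apply, Finset.mul_sum]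
    have hyne : y ≠ 0 := by
      obtain ⟨i₀, hi₀⟩ := Function.ne_iff.mp hx
      have hv : y (f i₀) = x i₀ := by simp [hy, hf.eq_iff]
      intro h0
      rw [h0] at hv
      exact hi₀ (by simpa using hv.symm)
    have := hA.dotProduct_mulVec_pos hyne
    rw [show star y = y from rfl, hform] at this
    simpa using this

lemma posDef_of_posSemidef_det_ne_zero {m : Type*} [Fintype m] [DecidableEq m]
    {P : Matrix m m ℝ} (hP : P.PosSemidef) (h : P.det ≠ 0) : P.PosDef := by
  refine posDef_iff_dotProduct_mulVec.mpr ⟨hP.1, fun x hx => ?_⟩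
  refine lt_of_le_of_ne (hP.dotProduct_mulVec_nonneg x) (Ne.symm fun h0 => ?_)
  have hPx : P *ᵥ x = 0 := (hP.dotProduct_mulVec_zero_iff x).mp h0
  have hinj : Function.Injective P.mulVec :=
    Matrix.mulVec_injective_iff_isUnit.mpr ((Matrix.isUnit_iff_isUnit_det P).mpr
      (isUnit_iff_ne_zero.mpr h))
  exact hx (hinj (by simpa using hPx))

lemma det_one_add_psd {m : Type*} [Fintype m] [DecidableEq m] {M : Matrix m m ℝ}
    (hM : M.PosSemidef) : 1 ≤ (1 + M).det ∧ ((1 + M).det = 1 ↔ M = 0) := by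
  classical
  have hH := hM.1
  set U : Matrix m m ℝ := (hH.eigenvectorUnitary : Matrix m m ℝ) with hU
  have hUU : U * star U = 1 := (Matrix.mem_unitaryGroup_iff).mp hH.eigenvectorUnitary.2
  have hUU' : star U * U = 1 := (Matrix.mem_unitaryGroup_iff').mp hH.eigenvectorUnitary.2
  have hspec : M = U * diagonal (RCLike.ofReal ∘ hH.eigenvalues) * star U := hH.spectral_theorem
  have hone : (1 : Matrix m m ℝ) = U * 1 * star U := by rw [mul_one, hUU]
  have hsum : 1 + M = U * (1 + diagonal (RCLike.ofReal ∘ hH.eigenvalues)) * star U := by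
    rw [mul_add, add_mul, ← hone, ← hspec]
  have hdet : (1 + M).det = ∏ i, (1 + hH.eigenvalues i) := by
    rw [hsum, det_mul, det_mul, mul_comm, ← mul_assoc, ← det_mul, hUU', det_one, one_mul]
    rw [show (1 : Matrix m m ℝ) + diagonal (RCLike.ofReal ∘ hH.eigenvalues)
        = diagonal (fun i => 1 + hH.eigenvalues i) by
      rw [← diagonal_one, diagonal_add]; rfl]
    rw [det_diagonal]
  have hnn : ∀ i ∈ (Finset.univ : Finset m), (1:ℝ) ≤ 1 + hH.eigenvalues i := fun i _ => by
    have := hM.eigenvalues_nonneg i; linarith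
  have hge : (1:ℝ) ≤ ∏ i, (1 + hH.eigenvalues i) := by
    have := Finset.prod_le_prod (f := fun _ : m => (1:ℝ))
      (g := fun i => 1 + hH.eigenvalues i) (fun i _ => zero_le_one) hnn
    simpa using this
  constructor
  · rw [hdet]; exact hge
  · constructor
    · intro h1
      rw [hdet] at h1
      have hzero : ∀ i, hH.eigenvalues i = 0 := by
        by_contra hc
        push_neg at hc
        obtain ⟨i, hi⟩ := hc
        have hipos : 0 < hH.eigenvalues i :=
          lt_of_le_of_ne (hM.eigenvalues_nonneg i) (Ne.symm hi)
        have hlt : (∏ _i : m, (1:ℝ)) < ∏ i, (1 + hH.eigenvalues i) :=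
          Finset.prod_lt_prod (fun i _ => zero_lt_one) hnn
            ⟨i, Finset.mem_univ i, by linarith⟩
        rw [h1] at hlt
        simp at hlt
      have : diagonal (RCLike.ofReal ∘ hH.eigenvalues) = (0 : Matrix m m ℝ) := by
        ext i j
        by_cases hij : i = j <;> simp [diagonal, hij, hzero]
      rw [hspec, this, mul_zero, zero_mul]
    · rintro rfl
      simp

open scoped MatrixOrder in
lemma exists_sqrt_psd {m : Type*} [Fintype m] [DecidableEq m] {P : Matrix m m ℝ}
    (hP : P.PosSemidef) : ∃ R : Matrix m m ℝ, R * R = P ∧ R.IsHermitian :=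
  ⟨CFC.sqrt P, CFC.sqrt_mul_sqrt_self P (nonneg_iff_posSemidef.mpr hP),
    (nonneg_iff_posSemidef.mp (CFC.sqrt_nonneg P)).1⟩

lemma det_add_psd {m : Type*} [Fintype m] [DecidableEq m] {P Q : Matrix m m ℝ}
    (hP : P.PosDef) (hQ : Q.PosSemidef) :
    P.det ≤ (P + Q).det ∧ ((P + Q).det = P.det ↔ Q = 0) := by
  classical
  obtain ⟨R, hRR, hRH⟩ := exists_sqrt_psd hP.posSemidef
  have hdetP : 0 < P.det := hP.det_pos
  have hdetR : R.det ≠ 0 := by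
    intro h
    rw [← hRR, det_mul, h, mul_zero] at hdetP
    exact lt_irrefl _ hdetP
  have hRunit : IsUnit R.det := isUnit_iff_ne_zero.mpr hdetR
  have hRiH : R⁻¹.IsHermitian := hRH.inv
  set M := R⁻¹ * Q * R⁻¹ with hM
  have hMpsd : M.PosSemidef := by
    have := hQ.mul_mul_conjTranspose_same R⁻¹
    rwa [hRiH.eq] at this
  have hcancel1 : R * R⁻¹ = 1 := Matrix.mul_nonsing_inv R hRunit
  have hcancel2 : R⁻¹ * R = 1 := Matrix.nonsing_inv_mul R hRunit
  have hQback : R * M * R = Q := by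
    have hassoc : R * (R⁻¹ * Q * R⁻¹) * R = (R * R⁻¹) * Q * (R⁻¹ * R) := by
      simp only [mul_assoc]
    rw [hM, hassoc, hcancel1, hcancel2, one_mul, mul_one]
  have hid : P + Q = R * (1 + M) * R := by
    rw [mul_add, mul_one, add_mul, hRR, hQback]
  have hdet : (P + Q).det = P.det * (1 + M).det := by
    rw [hid, det_mul, det_mul, ← hRR, det_mul]
    ring
  obtain ⟨h1le, h1eq⟩ := det_one_add_psd hMpsd
  constructor
  · rw [hdet]
    nlinarith
  · rw [hdet]
    constructor
    · intro h
      have : (1 + M).det = 1 :=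
        mul_left_cancel₀ hdetP.ne' (h.trans (mul_one P.det).symm)
      have hM0 : M = 0 := h1eq.mp this
      rw [← hQback, hM0, mul_zero, zero_mul]
    · rintro rfl
      have : M = 0 := by rw [hM]; simp
      rw [this]
      simp

lemma b_eq_zero_of_conj_zero {l m : Type*} [Fintype l] [Fintype m] [DecidableEq l] [DecidableEq m]
    {B : Matrix l m ℝ} {D : Matrix m m ℝ} (hD : D.PosDef)
    (h : B * D⁻¹ * Bᴴ = 0) : B = 0 := by
  classical
  obtain ⟨R, hRR, hRH⟩ := exists_sqrt_psd hD.inv.posSemidef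
  have h2 : (B * R) * (B * R)ᴴ = 0 := by
    have hassoc : B * R * (R * Bᴴ) = B * (R * R) * Bᴴ := by
      simp only [Matrix.mul_assoc]
    rw [conjTranspose_mul, hRH.eq, hassoc, hRR]
    exact h
  have hBR : B * R = 0 := Matrix.self_mul_conjTranspose_eq_zero.mp h2
  have hBD : B * D⁻¹ = 0 := by
    rw [← hRR, ← Matrix.mul_assoc, hBR, Matrix.zero_mul]
  have hDunit : IsUnit D.det := isUnit_iff_ne_zero.mpr hD.det_pos.ne'
  calc B = B * (D⁻¹ * D) := by rw [Matrix.nonsing_inv_mul D hDunit, Matrix.mul_one]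
  _ = (B * D⁻¹) * D := by rw [Matrix.mul_assoc]
  _ = 0 := by rw [hBD, Matrix.zero_mul]

/-- Split off the first block. -/
def splitEquiv (n : ℕ) : (Fin (n + 1) × Fin 2) ≃ (Fin 2 ⊕ (Fin n × Fin 2)) where
  toFun p := if h : p.1 = 0 then Sum.inl p.2 else Sum.inr (p.1.pred h, p.2)
  invFun q := Sum.elim (fun i => (0, i)) (fun p => (p.1.succ, p.2)) q
  left_inv p := by
    obtain ⟨m, i⟩ := p
    by_cases h : m = 0
    · simp [h]
    · simp [h]
  right_inv q := by
    rcases q with i | ⟨m, i⟩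
    · simp
    · simp [Fin.succ_ne_zero]

@[simp] lemma splitEquiv_symm_inl (n : ℕ) (i : Fin 2) :
    (splitEquiv n).symm (Sum.inl i) = (0, i) := rfl

@[simp] lemma splitEquiv_symm_inr (n : ℕ) (p : Fin n × Fin 2) :
    (splitEquiv n).symm (Sum.inr p) = (p.1.succ, p.2) := rfl

lemma fischer : ∀ (n : ℕ) (T : Matrix (Fin n × Fin 2) (Fin n × Fin 2) ℝ), T.PosDef →
    T.det ≤ (∏ m : Fin n, (Matrix.of fun i j => T (m, i) (m, j)).det) ∧
    (T.det = (∏ m : Fin n, (Matrix.of fun i j => T (m, i) (m, j)).det) ↔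
      ∀ m k : Fin n, m ≠ k → ∀ i j : Fin 2, T (m, i) (k, j) = 0) := by
  intro n
  induction n with
  | zero =>
    intro T hT
    have h1 : T.det = 1 := det_isEmpty
    refine ⟨by simp [h1], ?_, fun _ => by simp [h1]⟩
    intro _ m
    exact m.elim0
  | succ n IH =>
    intro T hT
    set ee := splitEquiv n with hee
    set U := T.submatrix ee.symm ee.symm with hU
    have hUpd : U.PosDef := posDef_submatrix_inj hT _ ee.symm.injective
    set A := U.toBlocks₁₁ with hA
    set B := U.toBlocks₁₂ with hB
    set D := U.toBlocks₂₂ with hD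
    have hApd : A.PosDef := by
      have := posDef_submatrix_inj hUpd Sum.inl Sum.inl_injective
      exact this
    have hDpd : D.PosDef := by
      have := posDef_submatrix_inj hUpd Sum.inr Sum.inr_injective
      exact this
    have hC : U.toBlocks₂₁ = Bᴴ := by
      ext p i
      have := congrFun (congrFun hUpd.1 (Sum.inr p)) (Sum.inl i)
      exact this.symm
    have hUeq : U = fromBlocks A B Bᴴ D := by
      rw [← hC, hA, hB, hD, fromBlocks_toBlocks]
    haveI : Invertible D := D.invertibleOfIsUnitDet hDpd.det_pos.ne'.isUnit
    have hdetU : U.det = D.det * (A - B * D⁻¹ * Bᴴ).det := by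
      rw [hUeq, det_fromBlocks₂₂, invOf_eq_nonsing_inv]
    set P := A - B * D⁻¹ * Bᴴ with hP
    set Q := B * D⁻¹ * Bᴴ with hQ
    have hQpsd : Q.PosSemidef := hDpd.inv.posSemidef.mul_mul_conjTranspose_same B
    have hPQ : A = P + Q := by rw [hP, hQ]; abel
    have hPpsd : P.PosSemidef :=
      (PosDef.fromBlocks₂₂ A B hDpd).mp (hUeq ▸ hUpd.posSemidef)
    have hdetTU : T.det = U.det := (det_submatrix_equiv_self ee.symm T).symm
    have hPdetpos : 0 < P.det := by
      have hU0 : 0 < U.det := hUpd.det_pos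
      rw [hdetU] at hU0
      rcases (mul_pos_iff.mp hU0) with ⟨_, h⟩ | ⟨h, _⟩
      · exact h
      · exact absurd hDpd.det_pos (by linarith)
    have hPpd : P.PosDef := posDef_of_posSemidef_det_ne_zero hPpsd hPdetpos.ne'
    obtain ⟨hle, heq⟩ := det_add_psd hPpd hQpsd
    rw [← hPQ] at hle heq
    obtain ⟨hDle, hDeq⟩ := IH D hDpd
    have hTBentry : ∀ (i : Fin 2) (p : Fin n × Fin 2), B i p = T (0, i) (p.1.succ, p.2) :=
      fun i p => rfl
    have hTCentry : ∀ (p : Fin n × Fin 2) (j : Fin 2), T (p.1.succ, p.2) (0, j) = B j p := by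
      intro p j
      have h := congrFun (congrFun hC p) j
      exact h
    have hTDentry : ∀ (m k : Fin n) (i j : Fin 2),
        D (m, i) (k, j) = T (m.succ, i) (k.succ, j) := fun _ _ _ _ => rfl
    have hblock0 : (Matrix.of fun i j => T ((0 : Fin (n + 1)), i) (0, j)) = A := by
      ext i j; rfl
    have hblocksucc : ∀ m : Fin n,
        (Matrix.of fun i j => T (m.succ, i) (m.succ, j)) =
          (Matrix.of fun i j => D (m, i) (m, j)) := by
      intro m; ext i j; exact (hTDentry m m i j).symm
    set pv := ∏ m : Fin n, (Matrix.of fun i j => D (m, i) (m, j)).det with hpv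
    have hprod : (∏ m : Fin (n + 1), (Matrix.of fun i j => T (m, i) (m, j)).det)
        = A.det * pv := by
      rw [Fin.prod_univ_succ, hblock0, hpv,
        Finset.prod_congr rfl fun m _ => congrArg Matrix.det (hblocksucc m)]
    have hpvpos : 0 < pv := lt_of_lt_of_le hDpd.det_pos hDle
    have hdetT : T.det = D.det * P.det := by rw [hdetTU, hdetU]
    constructor
    · rw [hdetT, hprod]
      calc D.det * P.det ≤ pv * A.det :=
            mul_le_mul hDle hle hPdetpos.le hpvpos.le
      _ = A.det * pv := mul_comm _ _
    · rw [hdetT, hprod]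
      constructor
      · intro h
        have h1 : D.det * P.det ≤ D.det * A.det :=
          mul_le_mul_of_nonneg_left hle hDpd.det_pos.le
        have h2 : D.det * A.det ≤ pv * A.det :=
          mul_le_mul_of_nonneg_right hDle hApd.det_pos.le
        have e1 : D.det * A.det = pv * A.det := by nlinarith [h, h1, h2]
        have e2 : D.det * P.det = D.det * A.det := by nlinarith [h, h1, h2]
        have pa : P.det = A.det := mul_left_cancel₀ hDpd.det_pos.ne' e2
        have dpi : D.det = pv := mul_right_cancel₀ hApd.det_pos.ne' e1
        have hQ0 : Q = 0 := heq.mp pa.symm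
        have hB0 : B = 0 := b_eq_zero_of_conj_zero hDpd hQ0
        have hDcond := hDeq.mp dpi
        intro m k hmk i j
        by_cases hm : m = 0
        · subst hm
          by_cases hk : k = 0
          · exact absurd hk.symm (by simpa using hmk)
          · obtain ⟨k', rfl⟩ : ∃ k', k = k'.succ := ⟨k.pred hk, (Fin.succ_pred k hk).symm⟩
            rw [← hTBentry i (k', j), hB0]
            rfl
        · obtain ⟨m', rfl⟩ : ∃ m', m = m'.succ := ⟨m.pred hm, (Fin.succ_pred m hm).symm⟩
          by_cases hk : k = 0
          · subst hk
            rw [hTCentry (m', i) j, hB0]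
            rfl
          · obtain ⟨k', rfl⟩ : ∃ k', k = k'.succ := ⟨k.pred hk, (Fin.succ_pred k hk).symm⟩
            rw [← hTDentry m' k' i j]
            exact hDcond m' k' (fun hc => hmk (by rw [hc])) i j
      · intro hcond
        have hB0 : B = 0 := by
          ext i p
          rw [hTBentry i p]
          exact hcond 0 (p.1.succ, p.2).1 (Ne.symm (Fin.succ_ne_zero _)) i p.2
        have hQ0 : Q = 0 := by rw [hQ, hB0]; simp
        have pa : A.det = P.det := heq.mpr hQ0
        have hDcond : ∀ m k : Fin n, m ≠ k → ∀ i j : Fin 2, D (m, i) (k, j) = 0 := by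
          intro m k hmk i j
          rw [hTDentry m k i j]
          exact hcond m.succ k.succ (fun hc => hmk (Fin.succ_injective _ hc)) i j
        have dpi : D.det = pv := hDeq.mpr hDcond
        rw [pa, dpi, mul_comm]

def pairEquiv (n : ℕ) : (Fin n × Fin 2) ≃ Fin (2 * n) where
  toFun p := ⟨2 * p.1.1 + p.2.1, by have := p.1.2; have := p.2.2; omega⟩
  invFun k := (⟨k.1 / 2, by have := k.2; omega⟩, ⟨k.1 % 2, by omega⟩)
  left_inv p := by
    obtain ⟨⟨m, hm⟩, ⟨i, hi⟩⟩ := p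
    have h1 : (2 * m + i) / 2 = m := by omega
    have h2 : (2 * m + i) % 2 = i := by omega
    simp [h1, h2]
  right_inv k := by
    obtain ⟨k, hk⟩ := k
    simp
    omega

lemma det_Jblock (n : ℕ) : (Jblock n).det = 1 := by
  classical
  have hsub : (Jblock n).submatrix (pairEquiv n) (pairEquiv n) =
      (Matrix.blockDiagonal fun _ : Fin n => J2).submatrix
        (Equiv.prodComm (Fin n) (Fin 2)) (Equiv.prodComm (Fin n) (Fin 2)) := by
    ext ⟨m, i⟩ ⟨k, j⟩
    have hi := i.2
    have hj := j.2
    show (if (2 * m.1 + i.1) / 2 = (2 * k.1 + j.1) / 2 then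
        J2 ⟨(2 * m.1 + i.1) % 2, by omega⟩ ⟨(2 * k.1 + j.1) % 2, by omega⟩ else 0) =
      Matrix.blockDiagonal (fun _ : Fin n => J2) (i, m) (j, k)
    rw [Matrix.blockDiagonal_apply]
    by_cases hmk : m = k
    · subst hmk
      rw [if_pos (by omega), if_pos rfl]
      congr 1 <;> exact Fin.ext (by simp; omega)
    · rw [if_neg, if_neg hmk]
      have hmk' : m.1 ≠ k.1 := fun hc => hmk (Fin.ext hc)
      omega
  have h1 : (Jblock n).det = ((Jblock n).submatrix (pairEquiv n) (pairEquiv n)).det :=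
    (det_submatrix_equiv_self _ _).symm
  rw [h1, hsub, det_submatrix_equiv_self, Matrix.det_blockDiagonal]
  have : J2.det = 1 := by
    simp [J2, Matrix.det_fin_two_of]
  simp [this]

lemma det_S_eq_prod_sq {n : ℕ} (S : Matrix (Fin (2 * n)) (Fin (2 * n)) ℝ) (ε : Fin n → ℝ)
    (hε : hasEigenemittances S ε) : S.det = ∏ m, ε m ^ 2 := by
  classical
  have hJ : (Jblock n).det = 1 := det_Jblock n
  have hM : ((S * Jblock n).map Complex.ofReal).det = ∏ m, (ε m : ℂ) ^ 2 := by
    rw [Matrix.det_eq_sign_charpoly_coeff, Polynomial.coeff_zero_eq_eval_zero, hε, eval_prod,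
      Fintype.card_fin]
    have he : ((-1 : ℂ)) ^ (2 * n) = 1 := Even.neg_one_pow ⟨n, two_mul n⟩
    rw [he, one_mul]
    refine Finset.prod_congr rfl fun m _ => ?_
    simp only [eval_mul, eval_sub, eval_add, eval_X, eval_C]
    have hr : ((0 : ℂ) - Complex.I * (ε m : ℂ)) * (0 + Complex.I * (ε m : ℂ))
        = -(Complex.I ^ 2) * (ε m : ℂ) ^ 2 := by ring
    rw [hr, Complex.I_sq]
    ring
  have hmap : ((S * Jblock n).map Complex.ofReal).det = ((S * Jblock n).det : ℂ) := by
    rw [show (S * Jblock n).map Complex.ofReal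
        = Complex.ofRealHom.mapMatrix (S * Jblock n) from rfl, ← RingHom.map_det]
    rfl
  have hcast : ((S * Jblock n).det : ℂ) = ((∏ m, ε m ^ 2 : ℝ) : ℂ) := by
    rw [← hmap, hM]
    push_cast
    rfl
  have hreal : (S * Jblock n).det = ∏ m, ε m ^ 2 := Complex.ofReal_inj.mp hcast
  rwa [det_mul, hJ, mul_one] at hreal

/-- A positive definite beam matrix is uncoupled (block-diagonal) if and only if
the product of its projected emittances equals the product of its
eigenemittances. -/
theorem stmt16 (n : ℕ) (S : Matrix (Fin (2 * n)) (Fin (2 * n)) ℝ) (ε : Fin n → ℝ)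
    (hS : S.PosDef) (hpos : ∀ m, 0 < ε m) (hε : hasEigenemittances S ε) :
    (∀ m k : Fin n, m ≠ k → blk S m k = 0) ↔
      (∏ m : Fin n, Real.sqrt (blk S m m).det) = ∏ m : Fin n, ε m := by
  classical
  have hTpd : (S.submatrix (pairEquiv n) (pairEquiv n)).PosDef :=
    posDef_submatrix_inj hS _ (pairEquiv n).injective
  set T := S.submatrix (pairEquiv n) (pairEquiv n) with hT
  have hdetTS : T.det = S.det := det_submatrix_equiv_self _ _
  have hdS : S.det = ∏ m, ε m ^ 2 := det_S_eq_prod_sq S ε hε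
  obtain ⟨-, hfiff⟩ := fischer n T hTpd
  have hdpos : ∀ m : Fin n, 0 < (blk S m m).det := by
    intro m
    have hpd : (T.submatrix (fun i : Fin 2 => (m, i)) (fun i : Fin 2 => (m, i))).PosDef :=
      posDef_submatrix_inj hTpd (fun i : Fin 2 => (m, i))
        (fun a b h => congrArg Prod.snd h)
    exact hpd.det_pos
  have step1 : (∀ m k : Fin n, m ≠ k → blk S m k = 0) ↔
      (∀ m k : Fin n, m ≠ k → ∀ i j : Fin 2, T (m, i) (k, j) = 0) := by
    constructor
    · intro h m k hmk i j
      exact congrFun (congrFun (h m k hmk) i) j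
    · intro h m k hmk
      ext i j
      exact h m k hmk i j
  have step2 : (∀ m k : Fin n, m ≠ k → ∀ i j : Fin 2, T (m, i) (k, j) = 0) ↔
      T.det = ∏ m : Fin n, (blk S m m).det := hfiff.symm
  have step3 : (T.det = ∏ m : Fin n, (blk S m m).det) ↔
      ((∏ m, ε m) ^ 2 = ∏ m : Fin n, (blk S m m).det) := by
    rw [hdetTS, hdS, Finset.prod_pow]
  have hR : ((∏ m : Fin n, Real.sqrt (blk S m m).det) = ∏ m, ε m) ↔
      ((∏ m, ε m) ^ 2 = ∏ m : Fin n, (blk S m m).det) := by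
    have hsq : (∏ m : Fin n, Real.sqrt (blk S m m).det) ^ 2
        = ∏ m : Fin n, (blk S m m).det := by
      rw [← Finset.prod_pow]
      exact Finset.prod_congr rfl fun m _ => Real.sq_sqrt (hdpos m).le
    constructor
    · intro h
      rw [← h, hsq]
    · intro h
      have h1 : 0 ≤ ∏ m : Fin n, Real.sqrt (blk S m m).det :=
        Finset.prod_nonneg fun m _ => Real.sqrt_nonneg _
      have h2 : 0 ≤ ∏ m, ε m := Finset.prod_nonneg fun m _ => (hpos m).le
      have h3 : (∏ m : Fin n, Real.sqrt (blk S m m).det) ^ 2 = (∏ m, ε m) ^ 2 :=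
        hsq.trans h.symm
      nlinarith [h3, h1, h2]
  exact step1.trans (step2.trans (step3.trans hR.symm))
end
end

section
/- (Sufficiency, n=2) Let ε₁, ε₂, ε̃₁, ε̃₂ be positive real numbers satisfying ε̃₁ + ε̃₂ ≥ ε₁ + ε₂ and |ε̃₁ − ε̃₂| ≤ |ε₁ − ε₂|. Then there exists a 4×4 real symmetric positive definite matrix Σ whose eigenemittances are ε₁, ε₂ and whose projected emittances are ε̃₁, ε̃₂. -/
open Matrix Polynomial

noncomputable section

lemma det_fin_four' {R : Type*} [CommRing R] (A : Matrix (Fin 4) (Fin 4) R) :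
    A.det =
      A 0 0 * (A 1 1 * A 2 2 * A 3 3 - A 1 1 * A 2 3 * A 3 2 - A 1 2 * A 2 1 * A 3 3
        + A 1 2 * A 2 3 * A 3 1 + A 1 3 * A 2 1 * A 3 2 - A 1 3 * A 2 2 * A 3 1)
      - A 0 1 * (A 1 0 * A 2 2 * A 3 3 - A 1 0 * A 2 3 * A 3 2 - A 1 2 * A 2 0 * A 3 3
        + A 1 2 * A 2 3 * A 3 0 + A 1 3 * A 2 0 * A 3 2 - A 1 3 * A 2 2 * A 3 0)
      + A 0 2 * (A 1 0 * A 2 1 * A 3 3 - A 1 0 * A 2 3 * A 3 1 - A 1 1 * A 2 0 * A 3 3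
        + A 1 1 * A 2 3 * A 3 0 + A 1 3 * A 2 0 * A 3 1 - A 1 3 * A 2 1 * A 3 0)
      - A 0 3 * (A 1 0 * A 2 1 * A 3 2 - A 1 0 * A 2 2 * A 3 1 - A 1 1 * A 2 0 * A 3 2
        + A 1 1 * A 2 2 * A 3 0 + A 1 2 * A 2 0 * A 3 1 - A 1 2 * A 2 1 * A 3 0) := by
  rw [Matrix.det_succ_row_zero, Fin.sum_univ_four]
  norm_num [Matrix.det_fin_three, Matrix.submatrix_apply, Fin.succAbove, Fin.lt_def,
    show (Fin.succ 2 : Fin 4) = 3 from rfl, show (Fin.castSucc 2 : Fin 4) = 2 from rfl,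
    show ((3 : Fin 4) : ℕ) = 3 from rfl, show (Fin.castSucc 1 : Fin 4) = 1 from rfl,
    show (Fin.castSucc 0 : Fin 4) = 0 from rfl, show (Fin.succ 1 : Fin 4) = 2 from rfl,
    show (Fin.succ 0 : Fin 4) = 1 from rfl]
  ring

lemma aux_prod (a b c d : ℝ) :
    ((!![a,0,b,0; 0,a,0,c; b,0,d,0; 0,c,0,d] *
      !![0,1,0,0; -1,0,0,0; 0,0,0,1; 0,0,-1,0] : Matrix (Fin 4) (Fin 4) ℝ).map
        Complex.ofReal)
    = !![0,(a:ℂ),0,(b:ℂ); -(a:ℂ),0,-(c:ℂ),0; 0,(b:ℂ),0,(d:ℂ); -(c:ℂ),0,-(d:ℂ),0] := by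
  ext i j
  fin_cases i <;> fin_cases j <;>
    simp [Matrix.mul_apply, Fin.sum_univ_four, Matrix.map_apply]

lemma aux_charpoly (a b c d : ℂ) :
    (!![0,a,0,b; -a,0,-c,0; 0,b,0,d; -c,0,-d,0] : Matrix (Fin 4) (Fin 4) ℂ).charpoly
    = X^4 + C (a^2 + d^2 + 2*b*c) * X^2 + C ((a*d - b^2)*(a*d - c^2)) := by
  rw [Matrix.charpoly, det_fin_four']
  simp [charmatrix_apply, Matrix.diagonal, map_ofNat]
  ring

lemma aux_eig (a b c d e1 e2 : ℝ)
    (hr1 : a^2 + d^2 + 2*(b*c) = e1^2 + e2^2)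
    (hr2 : (a*d - b^2)*(a*d - c^2) = (e1*e2)^2) :
    ((!![a,0,b,0; 0,a,0,c; b,0,d,0; 0,c,0,d] *
      !![0,1,0,0; -1,0,0,0; 0,0,0,1; 0,0,-1,0] : Matrix (Fin 4) (Fin 4) ℝ).map
        Complex.ofReal).charpoly
    = ∏ m : Fin 2, ((X - C (Complex.I * ((![e1, e2] m : ℝ) : ℂ)))
        * (X + C (Complex.I * ((![e1, e2] m : ℝ) : ℂ)))) := by
  rw [aux_prod, aux_charpoly, Fin.prod_univ_two]
  have h1 : ((a:ℂ))^2 + ((d:ℂ))^2 + 2*((b:ℂ)*(c:ℂ)) = ((e1:ℂ))^2 + ((e2:ℂ))^2 := by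
    exact_mod_cast congrArg Complex.ofReal hr1
  have h2 : ((a:ℂ)*(d:ℂ) - (b:ℂ)^2)*((a:ℂ)*(d:ℂ) - (c:ℂ)^2) = ((e1:ℂ)*(e2:ℂ))^2 := by
    exact_mod_cast congrArg Complex.ofReal hr2
  have hC1 := congrArg (C : ℂ → ℂ[X]) h1
  have hC2 := congrArg (C : ℂ → ℂ[X]) h2
  have h2C : (C (2:ℂ) : ℂ[X]) = 2 := _root_.map_ofNat C 2
  simp only [C_add, C_mul, C_sub, C_pow, h2C] at hC1 hC2
  have hI : (C (Complex.I) : ℂ[X])^2 = -1 := by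
    rw [← C_pow, Complex.I_sq, map_neg, C_1]
  simp only [Matrix.cons_val_zero, Matrix.cons_val_one, Matrix.head_cons,
    C_add, C_mul, C_sub, C_pow, h2C]
  linear_combination (X:ℂ[X])^2*hC1 + hC2
    + ((C (e1:ℂ))^2+(C (e2:ℂ))^2)*(X:ℂ[X])^2*hI
    + (1-(C Complex.I)^2)*(C (e1:ℂ))^2*(C (e2:ℂ))^2*hI

lemma quad_nonneg {a d e y z : ℝ} (ha : 0 < a) (had : e^2 < a*d) :
    0 ≤ a*y^2 + 2*e*(y*z) + d*z^2 := by
  nlinarith [sq_nonneg (a*y+e*z), mul_nonneg (sub_pos.mpr had).le (sq_nonneg z)]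

lemma quad_pos {a d e y z : ℝ} (ha : 0 < a) (had : e^2 < a*d) (h : y ≠ 0 ∨ z ≠ 0) :
    0 < a*y^2 + 2*e*(y*z) + d*z^2 := by
  rcases eq_or_ne z 0 with rfl | hz
  · have hy := h.resolve_right (by simp)
    have h0 : 0 < y^2 := by positivity
    nlinarith [mul_pos ha h0]
  · nlinarith [sq_nonneg (a*y+e*z), mul_pos (sub_pos.mpr had) (mul_self_pos.mpr hz)]

lemma aux_posdef (a b c d : ℝ) (ha : 0 < a) (hb : b^2 < a*d) (hc : c^2 < a*d) :
    (!![a,0,b,0; 0,a,0,c; b,0,d,0; 0,c,0,d] : Matrix (Fin 4) (Fin 4) ℝ).PosDef := by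
  rw [Matrix.posDef_iff_dotProduct_mulVec]
  constructor
  · ext i j
    fin_cases i <;> fin_cases j <;> simp [Matrix.conjTranspose_apply]
  · intro x hx
    have hform : star x ⬝ᵥ (!![a,0,b,0; 0,a,0,c; b,0,d,0; 0,c,0,d] : Matrix (Fin 4) (Fin 4) ℝ) *ᵥ x
        = (a*(x 0)^2 + 2*b*(x 0 * x 2) + d*(x 2)^2)
          + (a*(x 1)^2 + 2*c*(x 1 * x 3) + d*(x 3)^2) := by
      simp [dotProduct, Matrix.mulVec, Fin.sum_univ_four]
      ring
    rw [hform]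
    have hcase : (x 0 ≠ 0 ∨ x 2 ≠ 0) ∨ (x 1 ≠ 0 ∨ x 3 ≠ 0) := by
      by_contra h
      push_neg at h
      exact hx (funext fun i => by fin_cases i <;> simp [h.1.1, h.1.2, h.2.1, h.2.2])
    rcases hcase with h | h
    · exact add_pos_of_pos_of_nonneg (quad_pos ha hb h) (quad_nonneg ha hc)
    · exact add_pos_of_nonneg_of_pos (quad_nonneg ha hb) (quad_pos ha hc h)


set_option maxHeartbeats 1000000 in
/-- Sufficiency (n = 2): any positive reals satisfying `ε̃₁ + ε̃₂ ≥ ε₁ + ε₂` and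
`|ε̃₁ − ε̃₂| ≤ |ε₁ − ε₂|` are realized as the eigenemittances and projected
emittances of some 4×4 beam matrix. -/
theorem stmt19 (ε₁ ε₂ εp₁ εp₂ : ℝ)
    (h₁ : 0 < ε₁) (h₂ : 0 < ε₂) (hp₁ : 0 < εp₁) (hp₂ : 0 < εp₂)
    (hsum : ε₁ + ε₂ ≤ εp₁ + εp₂) (hdiff : |εp₁ - εp₂| ≤ |ε₁ - ε₂|) :
    ∃ S : Matrix (Fin (2 * 2)) (Fin (2 * 2)) ℝ, S.PosDef ∧
      hasEigenemittances S ![ε₁, ε₂] ∧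
      Real.sqrt (blk S 0 0).det = εp₁ ∧ Real.sqrt (blk S 1 1).det = εp₂ := by
  set P : ℝ := εp₁ * εp₂ with hPdef
  set s : ℝ := (ε₁^2 + ε₂^2 - εp₁^2 - εp₂^2)/2 with hsdef
  set t : ℝ := (P^2 + s^2 - (ε₁*ε₂)^2)/P with htdef
  have hP : 0 < P := mul_pos hp₁ hp₂
  have hE : 0 < ε₁*ε₂ := mul_pos h₁ h₂
  have hPt : P * t = P^2 + s^2 - (ε₁*ε₂)^2 := by
    rw [htdef]; field_simp
  have hsq : (εp₁ - εp₂)^2 ≤ (ε₁ - ε₂)^2 := by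
    have h := pow_le_pow_left₀ (abs_nonneg (εp₁ - εp₂)) hdiff 2
    rwa [sq_abs, sq_abs] at h
  have hPs1 : ε₁*ε₂ ≤ P - s := by rw [hPdef, hsdef]; nlinarith
  have hPs2 : ε₁*ε₂ ≤ P + s := by rw [hPdef, hsdef]; nlinarith [hsq]
  have htp : 0 ≤ t + 2*s := by nlinarith [hPt, hPs2, hE, hP]
  have htm : 0 ≤ t - 2*s := by nlinarith [hPt, hPs1, hE, hP]
  have h2P : t < 2*P := by nlinarith [hPt, hPs1, hPs2, hE, hP]
  set u : ℝ := Real.sqrt (t + 2*s) with hudef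
  set v : ℝ := Real.sqrt (t - 2*s) with hvdef
  set b : ℝ := (u + v)/2 with hbdef
  set c : ℝ := (u - v)/2 with hcdef
  have hu : u^2 = t + 2*s := Real.sq_sqrt htp
  have hv : v^2 = t - 2*s := Real.sq_sqrt htm
  have huv : 0 ≤ u*v := mul_nonneg (Real.sqrt_nonneg _) (Real.sqrt_nonneg _)
  have huv2 : (u*v)^2 = (t + 2*s)*(t - 2*s) := by rw [mul_pow, hu, hv]
  have hbc : b*c = s := by rw [hbdef, hcdef]; linear_combination hu/4 - hv/4
  have hbb : b^2 + c^2 = t := by rw [hbdef, hcdef]; linear_combination hu/2 + hv/2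
  have hlt : (u*v)^2 < (2*P - t)^2 := by nlinarith [huv2, hPt, hE]
  have key : u*v < 2*P - t := by nlinarith [hlt, huv, h2P]
  have hb2 : b^2 < P := by
    rw [hbdef]; nlinarith [key, hu, hv, huv]
  have hc2 : c^2 < P := by
    rw [hcdef]; nlinarith [key, hu, hv, huv]
  have hr1 : εp₁^2 + εp₂^2 + 2*(b*c) = ε₁^2 + ε₂^2 := by
    rw [hbc, hsdef]; ring
  have hr2 : (εp₁*εp₂ - b^2)*(εp₁*εp₂ - c^2) = (ε₁*ε₂)^2 := by
    rw [← hPdef]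
    linear_combination (-(P))*hbb + (b*c+s)*hbc - hPt
  refine ⟨!![εp₁,0,b,0; 0,εp₁,0,c; b,0,εp₂,0; 0,c,0,εp₂], ?_, ?_, ?_, ?_⟩
  · exact aux_posdef εp₁ b c εp₂ hp₁ (by rw [← hPdef]; exact hb2) (by rw [← hPdef]; exact hc2)
  · unfold hasEigenemittances
    have hJ : Jblock 2 = (!![0,1,0,0; -1,0,0,0; 0,0,0,1; 0,0,-1,0] :
        Matrix (Fin (2*2)) (Fin (2*2)) ℝ) := by
      ext i j
      fin_cases i <;> fin_cases j <;> simp [Jblock, J2, vecHead, vecTail]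
    rw [hJ]
    exact aux_eig εp₁ b c εp₂ ε₁ ε₂ hr1 hr2
  · have hblk : blk (n := 2) (!![εp₁,0,b,0; 0,εp₁,0,c; b,0,εp₂,0; 0,c,0,εp₂]) 0 0
        = !![εp₁,0; 0,εp₁] := by
      ext i j
      fin_cases i <;> fin_cases j <;> rfl
    rw [hblk, Matrix.det_fin_two_of, show εp₁*εp₁ - 0*0 = εp₁*εp₁ by ring]
    exact Real.sqrt_mul_self hp₁.le
  · have hblk : blk (n := 2) (!![εp₁,0,b,0; 0,εp₁,0,c; b,0,εp₂,0; 0,c,0,εp₂]) 1 1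
        = !![εp₂,0; 0,εp₂] := by
      ext i j
      fin_cases i <;> fin_cases j <;> rfl
    rw [hblk, Matrix.det_fin_two_of, show εp₂*εp₂ - 0*0 = εp₂*εp₂ by ring]
    exact Real.sqrt_mul_self hp₂.le
end
end
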